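/- With J_γ^s as above, O_α the GKZ operators, r^α = v^α_0 - v^α_+, and the 'modified hyperexponent' F_γ(z) = Σ_{s ∈ Z^k_{≥0}} [(-1)^s / s!] J_{γ - s r}^s(z) (finite sum), one has (O_α + ∂²/∂z^{v^α_0}) F_γ = 0 for each α, i.e. F_γ solves the antisymmetrized GKZ (A-GKZ) system Ō_α F = 0 where Ō_α = O_α + ∂²/∂z^{v^α_0}. -/

import Mathlib

open MvPolynomial

/-- The exponent vector `γ + t·v = γ + t₁v¹ + … + t_k v^k`. -/
def expVec {N k : ℕ} (v : Fin k → Fin N → ℤ) (γ : Fin N → ℤ) (t : Fin k → ℤ) :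
    Fin N → ℤ :=
  fun i => γ i + ∑ α, t α * v α i

/-- The Horn-type polynomial
`J_γ^s(z) = Σ_{t ∈ ℤ^k} (t+1)⋯(t+s) z^{γ+tv}/(γ+tv)!` (multi-index notation; terms
whose exponent vector has a negative coordinate vanish); `hfin` ensures the sum is
finite. -/
noncomputable def Jpoly {N k : ℕ} (v : Fin k → Fin N → ℤ)
    (hfin : ∀ γ : Fin N → ℤ, {t : Fin k → ℤ | ∀ i, 0 ≤ expVec v γ t i}.Finite)
    (γ : Fin N → ℤ) (s : Fin k → ℕ) : MvPolynomial (Fin N) ℚ :=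
  ∑ t ∈ (hfin γ).toFinset,
    ((∏ α, ∏ m ∈ Finset.range (s α), ((t α : ℚ) + m + 1)) *
        ((∏ i, (expVec v γ t i).toNat.factorial : ℕ) : ℚ)⁻¹) •
      monomial (Finsupp.equivFunOnFinite.symm fun i => (expVec v γ t i).toNat) (1 : ℚ)

/-- The modified hyperexponent `F_γ = Σ_{s ∈ ℤ^k_{≥0}} ((-1)^s / s!) J_{γ - s r}^s`,
a finite sum: `hS` records that only finitely many `s` contribute a nonzero term. -/
noncomputable def FF {N k : ℕ} (v : Fin k → Fin N → ℤ)
    (hfin : ∀ γ : Fin N → ℤ, {t : Fin k → ℤ | ∀ i, 0 ≤ expVec v γ t i}.Finite)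
    (γ : Fin N → ℤ) (r : Fin k → Fin N → ℤ)
    (hS : {s : Fin k → ℕ |
        Jpoly v hfin (fun i => γ i - ∑ β, (s β : ℤ) * r β i) s ≠ 0}.Finite) :
    MvPolynomial (Fin N) ℚ :=
  ∑ s ∈ hS.toFinset,
    ((-1 : ℚ) ^ (∑ β, s β) * ((∏ β, (s β).factorial : ℕ) : ℚ)⁻¹) •
      Jpoly v hfin (fun i => γ i - ∑ β, (s β : ℤ) * r β i) s

lemma flipIf {N : ℕ} (u i : Fin N) : (if u = i then (1:ℕ) else 0) = if i = u then 1 else 0 := by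
  by_cases h : u = i
  · rw [if_pos h, if_pos h.symm]
  · rw [if_neg h, if_neg (fun hh => h hh.symm)]

noncomputable def Wterm {N : ℕ} (q : ℚ) (e : Fin N → ℤ) : MvPolynomial (Fin N) ℚ :=
  if ∀ i, 0 ≤ e i then
    (q * ((∏ i, (e i).toNat.factorial : ℕ) : ℚ)⁻¹) •
      monomial (Finsupp.equivFunOnFinite.symm fun i => (e i).toNat) (1 : ℚ)
  else 0

lemma Wterm_smul {N : ℕ} (q : ℚ) (e : Fin N → ℤ) : Wterm q e = q • Wterm 1 e := by
  unfold Wterm; split <;> simp [smul_smul]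

lemma Wterm_neg {N : ℕ} (q : ℚ) (e : Fin N → ℤ) (h : ¬ ∀ i, 0 ≤ e i) : Wterm q e = 0 :=
  if_neg h

lemma Wterm_zero {N : ℕ} (e : Fin N → ℤ) : Wterm 0 e = 0 := by
  unfold Wterm; split <;> simp

lemma pderiv2_Wterm {N : ℕ} (x y : Fin N) (hxy : x ≠ y) (q : ℚ) (e : Fin N → ℤ)
    (he : ∀ i, 0 ≤ e i) :
    pderiv x (pderiv y (Wterm q e)) =
      Wterm q (fun i => e i - (if i = x then 1 else 0) - (if i = y then 1 else 0)) := by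
  rw [Wterm, if_pos he, (pderiv y).map_smul, pderiv_monomial, (pderiv x).map_smul,
    pderiv_monomial]
  set μ : (Fin N) →₀ ℕ := Finsupp.equivFunOnFinite.symm fun i => (e i).toNat with hμ
  have hμap : ∀ i, μ i = (e i).toNat := fun i => by simp [hμ]
  have hνx : (μ - fun₀ | y => 1) x = μ x := by
    simp [Finsupp.tsub_apply, Finsupp.single_apply, (Ne.symm hxy)]
  by_cases hz : (e x).toNat = 0 ∨ (e y).toNat = 0
  · have hc : ((1 : ℚ) * (μ y : ℚ)) * ((μ - fun₀ | y => 1) x : ℚ) = 0 := by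
      rw [hνx]
      rcases hz with h | h
      · simp [hμap, h]
      · simp [hμap, h]
    rw [hc, monomial_zero, smul_zero]
    rw [Wterm_neg]
    push_neg
    rcases hz with h | h
    · exact ⟨x, by simp; omega⟩
    · exact ⟨y, by simp [hxy, Ne.symm hxy]; omega⟩
  · push_neg at hz
    obtain ⟨hx1, hy1⟩ := hz
    have hex : 1 ≤ e x := by have := he x; omega
    have hey : 1 ≤ e y := by have := he y; omega
    have hcond : ∀ i, 0 ≤ e i - (if i = x then 1 else 0) - (if i = y then 1 else 0) := by
      intro i
      have h1 := he i
      by_cases hix : i = x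
      · rw [if_pos hix, if_neg (fun h => hxy (hix.symm.trans h))]
        have : e i = e x := by rw [hix]
        omega
      · by_cases hiy : i = y
        · rw [if_neg hix, if_pos hiy]
          have : e i = e y := by rw [hiy]
          omega
        · rw [if_neg hix, if_neg hiy]; omega
    rw [Wterm, if_pos hcond]
    have hexp : μ - (fun₀ | y => 1) - (fun₀ | x => 1) =
        Finsupp.equivFunOnFinite.symm
          (fun i => (e i - (if i = x then 1 else 0) - (if i = y then 1 else 0)).toNat) := by
      ext i
      have h1 := he i
      have h2 := hμap i
      simp only [Finsupp.tsub_apply, Finsupp.single_apply,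
        Finsupp.coe_equivFunOnFinite_symm]
      rw [flipIf y i, flipIf x i]
      by_cases hix : i = x
      · have hiy : ¬ i = y := fun h => hxy (hix.symm.trans h)
        rw [if_pos hix, if_neg hiy, if_pos hix, if_neg hiy]
        have : e i = e x := by rw [hix]
        omega
      · by_cases hiy : i = y
        · rw [if_neg hix, if_pos hiy, if_neg hix, if_pos hiy]
          have : e i = e y := by rw [hiy]
          omega
        · rw [if_neg hix, if_neg hiy, if_neg hix, if_neg hiy]
          omega
    rw [hνx, hexp, smul_monomial, smul_monomial]
    congr 1
    -- coefficient identity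
    have hfx : (e x).toNat * ((e x - 1).toNat).factorial = (e x).toNat.factorial := by
      have h3 : (e x - 1).toNat = (e x).toNat - 1 := by omega
      rw [h3]
      exact Nat.mul_factorial_pred (by omega)
    have hfy : (e y).toNat * ((e y - 1).toNat).factorial = (e y).toNat.factorial := by
      have h3 : (e y - 1).toNat = (e y).toNat - 1 := by omega
      rw [h3]
      exact Nat.mul_factorial_pred (by omega)
    set e' : Fin N → ℤ := fun i => e i - (if i = x then 1 else 0) - (if i = y then 1 else 0)
      with he'
    have hsplit : ∀ i : Fin N, (e i).toNat.factorial =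
        (if i = x then (e x).toNat else if i = y then (e y).toNat else 1) *
          (e' i).toNat.factorial := by
      intro i
      by_cases hix : i = x
      · have hiy : ¬ i = y := fun h => hxy (hix.symm.trans h)
        have h3 : e' i = e x - 1 := by
          rw [he']; simp only; rw [if_pos hix, if_neg hiy]
          have : e i = e x := by rw [hix]
          omega
        rw [if_pos hix, h3]
        have : e i = e x := by rw [hix]
        rw [this]
        exact hfx.symm
      · by_cases hiy : i = y
        · have h3 : e' i = e y - 1 := by
            rw [he']; simp only; rw [if_neg hix, if_pos hiy]
            have : e i = e y := by rw [hiy]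
            omega
          rw [if_neg hix, if_pos hiy, h3]
          have : e i = e y := by rw [hiy]
          rw [this]
          exact hfy.symm
        · have h3 : e' i = e i := by
            rw [he']; simp only; rw [if_neg hix, if_neg hiy]; ring
          rw [if_neg hix, if_neg hiy, h3, one_mul]
    have hind : (∏ i, (if i = x then (e x).toNat else if i = y then (e y).toNat else 1)) =
        (e x).toNat * (e y).toNat := by
      rw [← Finset.mul_prod_erase Finset.univ _ (Finset.mem_univ x), if_pos rfl]
      congr 1
      rw [← Finset.mul_prod_erase (Finset.univ.erase x) _
          (Finset.mem_erase.mpr ⟨Ne.symm hxy, Finset.mem_univ y⟩),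
        if_neg (Ne.symm hxy), if_pos rfl]
      have hone : ∏ i ∈ (Finset.univ.erase x).erase y,
          (if i = x then (e x).toNat else if i = y then (e y).toNat else 1) = 1 := by
        apply Finset.prod_eq_one
        intro i hi
        simp only [Finset.mem_erase] at hi
        rw [if_neg hi.2.1, if_neg hi.1]
      rw [hone, mul_one]
    have hprod : (∏ i, (e i).toNat.factorial) =
        (e x).toNat * (e y).toNat * ∏ i, (e' i).toNat.factorial := by
      calc (∏ i, (e i).toNat.factorial)
          = ∏ i, ((if i = x then (e x).toNat else if i = y then (e y).toNat else 1) *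
              (e' i).toNat.factorial) := Finset.prod_congr rfl (fun i _ => hsplit i)
        _ = (∏ i, (if i = x then (e x).toNat else if i = y then (e y).toNat else 1)) *
              ∏ i, (e' i).toNat.factorial := Finset.prod_mul_distrib
        _ = (e x).toNat * (e y).toNat * ∏ i, (e' i).toNat.factorial := by rw [hind]
    have hne : ((∏ i, (e' i).toNat.factorial : ℕ) : ℚ) ≠ 0 := by
      have : 0 < ∏ i, (e' i).toNat.factorial :=
        Finset.prod_pos (fun i _ => (e' i).toNat.factorial_pos)
      exact_mod_cast this.ne'
    have hx0 : ((e x).toNat : ℚ) ≠ 0 := by exact_mod_cast hx1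
    have hy0 : ((e y).toNat : ℚ) ≠ 0 := by exact_mod_cast hy1
    rw [hμap x, hμap y, hprod]
    change _ = (q * ((∏ i, (e' i).toNat.factorial : ℕ) : ℚ)⁻¹) • (1 : ℚ)
    push_cast
    field_simp
    have h1 := mul_inv_cancel₀ hx0
    have h2 := mul_inv_cancel₀ hy0
    linear_combination (q * (∏ i, ((e' i).toNat.factorial : ℚ))⁻¹ * ((e y).toNat : ℚ) *
      ((e y).toNat : ℚ)⁻¹) * h1 + (q * (∏ i, ((e' i).toNat.factorial : ℚ))⁻¹) * h2

noncomputable def Psum {N k : ℕ} (v : Fin k → Fin N → ℤ)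
    (hfin : ∀ γ : Fin N → ℤ, {t : Fin k → ℤ | ∀ i, 0 ≤ expVec v γ t i}.Finite)
    (g : Fin N → ℤ) (n : (Fin k → ℤ) → ℚ) : MvPolynomial (Fin N) ℚ :=
  ∑ t ∈ (hfin g).toFinset, Wterm (n t) (expVec v g t)

lemma Psum_eq_sum {N k : ℕ} {v : Fin k → Fin N → ℤ}
    {hfin : ∀ γ : Fin N → ℤ, {t : Fin k → ℤ | ∀ i, 0 ≤ expVec v γ t i}.Finite}
    {g : Fin N → ℤ} {T : Finset (Fin k → ℤ)} (hT : (hfin g).toFinset ⊆ T)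
    (n : (Fin k → ℤ) → ℚ) :
    ∑ t ∈ T, Wterm (n t) (expVec v g t) = Psum v hfin g n := by
  rw [Psum]
  exact (Finset.sum_subset hT (fun t _ htn =>
    Wterm_neg _ _ (by simpa [Set.Finite.mem_toFinset] using htn))).symm

lemma Psum_zero {N k : ℕ} (v : Fin k → Fin N → ℤ)
    (hfin : ∀ γ : Fin N → ℤ, {t : Fin k → ℤ | ∀ i, 0 ≤ expVec v γ t i}.Finite)
    (g : Fin N → ℤ) {n : (Fin k → ℤ) → ℚ} (hn : ∀ t, n t = 0) :
    Psum v hfin g n = 0 := by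
  rw [Psum]
  exact Finset.sum_eq_zero (fun t _ => by rw [hn t]; exact Wterm_zero _)

lemma Psum_smul {N k : ℕ} (v : Fin k → Fin N → ℤ)
    (hfin : ∀ γ : Fin N → ℤ, {t : Fin k → ℤ | ∀ i, 0 ≤ expVec v γ t i}.Finite)
    (g : Fin N → ℤ) (c : ℚ) (n : (Fin k → ℤ) → ℚ) :
    Psum v hfin g (fun t => c * n t) = c • Psum v hfin g n := by
  rw [Psum, Psum, Finset.smul_sum]
  exact Finset.sum_congr rfl (fun t _ => by
    rw [Wterm_smul (c * n t), Wterm_smul (n t), smul_smul])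

lemma Psum_congr {N k : ℕ} (v : Fin k → Fin N → ℤ)
    (hfin : ∀ γ : Fin N → ℤ, {t : Fin k → ℤ | ∀ i, 0 ≤ expVec v γ t i}.Finite)
    (g : Fin N → ℤ) {n n' : (Fin k → ℤ) → ℚ} (hn : ∀ t, n t = n' t) :
    Psum v hfin g n = Psum v hfin g n' := by
  rw [Psum, Psum]
  exact Finset.sum_congr rfl (fun t _ => by rw [hn t])

lemma Jpoly_eq_Psum {N k : ℕ} (v : Fin k → Fin N → ℤ)
    (hfin : ∀ γ : Fin N → ℤ, {t : Fin k → ℤ | ∀ i, 0 ≤ expVec v γ t i}.Finite)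
    (g : Fin N → ℤ) (s : Fin k → ℕ) :
    Jpoly v hfin g s =
      Psum v hfin g (fun t => ∏ β, ∏ m ∈ Finset.range (s β), ((t β : ℚ) + m + 1)) := by
  rw [Jpoly, Psum]
  refine Finset.sum_congr rfl (fun t ht => ?_)
  rw [Wterm, if_pos (by simpa [Set.Finite.mem_toFinset] using ht)]

lemma pderiv2_Jpoly {N k : ℕ} (v : Fin k → Fin N → ℤ)
    (hfin : ∀ γ : Fin N → ℤ, {t : Fin k → ℤ | ∀ i, 0 ≤ expVec v γ t i}.Finite)
    (g : Fin N → ℤ) (s : Fin k → ℕ) (x y : Fin N) (hxy : x ≠ y) :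
    pderiv x (pderiv y (Jpoly v hfin g s)) =
      Psum v hfin (fun i => g i - (if i = x then 1 else 0) - (if i = y then 1 else 0))
        (fun t => ∏ β, ∏ m ∈ Finset.range (s β), ((t β : ℚ) + m + 1)) := by
  rw [Jpoly_eq_Psum, Psum, map_sum, map_sum]
  have hstep : ∀ t ∈ (hfin g).toFinset,
      pderiv x (pderiv y (Wterm
          (∏ β, ∏ m ∈ Finset.range (s β), ((t β : ℚ) + m + 1)) (expVec v g t))) =
        Wterm (∏ β, ∏ m ∈ Finset.range (s β), ((t β : ℚ) + m + 1))
          (expVec v (fun i => g i - (if i = x then 1 else 0) - (if i = y then 1 else 0)) t) := by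
    intro t ht
    rw [pderiv2_Wterm x y hxy _ _ (by simpa [Set.Finite.mem_toFinset] using ht)]
    congr 1
    funext i
    simp only [expVec]
    ring
  rw [Finset.sum_congr rfl hstep]
  refine Psum_eq_sum ?_ _
  intro t ht
  simp only [Set.Finite.mem_toFinset, Set.mem_setOf_eq] at ht ⊢
  intro i
  have h := ht i
  have key : expVec v g t i =
      expVec v (fun i => g i - (if i = x then 1 else 0) - (if i = y then 1 else 0)) t i +
        ((if i = x then 1 else 0) + (if i = y then 1 else 0)) := by
    simp only [expVec]; ring
  have h0a : (0:ℤ) ≤ if i = x then 1 else 0 := by split <;> norm_num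
  have h0b : (0:ℤ) ≤ if i = y then 1 else 0 := by split <;> norm_num
  linarith

lemma Psum_shift {N k : ℕ} (v : Fin k → Fin N → ℤ)
    (hfin : ∀ γ : Fin N → ℤ, {t : Fin k → ℤ | ∀ i, 0 ≤ expVec v γ t i}.Finite)
    (α : Fin k) (g : Fin N → ℤ) (n : (Fin k → ℤ) → ℚ) :
    Psum v hfin g n = Psum v hfin (fun i => g i - v α i)
      (fun t => n (fun β => t β - if β = α then 1 else 0)) := by
  have hδ : ∀ (t : Fin k → ℤ) (i : Fin N),
      expVec v (fun i => g i - v α i) (fun β => t β + if β = α then 1 else 0) i =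
        expVec v g t i := by
    intro t i
    simp only [expVec]
    have h1 : ∀ β : Fin k, (t β + if β = α then 1 else 0) * v β i =
        t β * v β i + (if β = α then v β i else 0) := by
      intro β; split <;> ring
    rw [Finset.sum_congr rfl (fun β _ => h1 β), Finset.sum_add_distrib,
      Finset.sum_ite_eq' Finset.univ α (fun β => v β i)]
    simp only [Finset.mem_univ, if_true]
    ring
  refine Finset.sum_nbij' (fun t β => t β + if β = α then 1 else 0)
    (fun t β => t β - if β = α then 1 else 0) ?_ ?_ ?_ ?_ ?_
  · intro t ht
    simp only [Set.Finite.mem_toFinset, Set.mem_setOf_eq] at ht ⊢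
    intro i
    rw [hδ t i]
    exact ht i
  · intro t' ht'
    simp only [Set.Finite.mem_toFinset, Set.mem_setOf_eq] at ht' ⊢
    intro i
    have heq := hδ (fun β => t' β - if β = α then 1 else 0) i
    have ht'' : (fun β => (t' β - if β = α then 1 else 0) + if β = α then 1 else 0) = t' := by
      funext β; ring
    rw [ht''] at heq
    have := ht' i
    omega
  · intro t _; funext β; ring
  · intro t _; funext β; ring
  · intro t ht
    simp only
    congr 1
    · congr 1
      funext β
      ring
    · funext i
      rw [hδ t i]

lemma scalar_id {k : ℕ} (α : Fin k) (s : Fin k → ℕ) (t : Fin k → ℤ) :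
    ((-1:ℚ) ^ (∑ β, s β) * ((∏ β, (s β).factorial : ℕ) : ℚ)⁻¹) *
        (∏ β, ∏ m ∈ Finset.range (s β), ((t β : ℚ) + m + 1)) -
      ((-1:ℚ) ^ (∑ β, s β) * ((∏ β, (s β).factorial : ℕ) : ℚ)⁻¹) *
        (∏ β, ∏ m ∈ Finset.range (s β),
          (((t β - if β = α then 1 else 0 : ℤ) : ℚ) + m + 1)) +
      (if s α = 0 then 0 else
        ((-1:ℚ) ^ (∑ β, (s β - if β = α then 1 else 0)) *
            ((∏ β, (s β - if β = α then 1 else 0).factorial : ℕ) : ℚ)⁻¹) *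
          (∏ β, ∏ m ∈ Finset.range (s β - if β = α then 1 else 0),
            ((t β : ℚ) + m + 1))) = 0 := by
  by_cases h0 : s α = 0
  · rw [if_pos h0]
    have hP : (∏ β, ∏ m ∈ Finset.range (s β),
        (((t β - if β = α then 1 else 0 : ℤ) : ℚ) + m + 1)) =
        ∏ β, ∏ m ∈ Finset.range (s β), ((t β : ℚ) + m + 1) := by
      refine Finset.prod_congr rfl (fun β _ => ?_)
      by_cases hβ : β = α
      · rw [hβ, h0]; simp
      · rw [if_neg hβ]
        refine Finset.prod_congr rfl (fun j _ => ?_)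
        push_cast
        ring
    rw [hP]; ring
  · obtain ⟨m, hm⟩ : ∃ m, s α = m + 1 := ⟨s α - 1, by omega⟩
    rw [if_neg h0]
    set s' : Fin k → ℕ := fun β => s β - if β = α then 1 else 0 with hs'
    have hs'α : s' α = m := by simp [hs', hm]
    have hs'β : ∀ β, β ≠ α → s' β = s β := fun β hβ => by simp [hs', hβ]
    set X : ℚ := ∏ j ∈ Finset.range m, ((t α : ℚ) + j + 1) with hX
    set E : ℚ := ∏ β ∈ Finset.univ.erase α, ∏ j ∈ Finset.range (s β),
      ((t β : ℚ) + j + 1) with hE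
    have f1 : (∏ β, ∏ j ∈ Finset.range (s β), ((t β : ℚ) + j + 1)) =
        (X * ((t α : ℚ) + m + 1)) * E := by
      rw [← Finset.mul_prod_erase Finset.univ _ (Finset.mem_univ α), hm,
        Finset.prod_range_succ]
      try push_cast
      try ring
    have f2 : (∏ β, ∏ j ∈ Finset.range (s β),
        (((t β - if β = α then 1 else 0 : ℤ) : ℚ) + j + 1)) = (X * (t α : ℚ)) * E := by
      rw [← Finset.mul_prod_erase Finset.univ _ (Finset.mem_univ α)]
      have hα : (∏ j ∈ Finset.range (s α),
          (((t α - if α = α then 1 else 0 : ℤ) : ℚ) + j + 1)) = X * (t α : ℚ) := by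
        rw [if_pos rfl, hm, Finset.prod_range_succ']
        push_cast
        congr 1
        · refine Finset.prod_congr rfl (fun j _ => ?_)
          push_cast
          ring
        · ring
      have hrest : (∏ β ∈ Finset.univ.erase α, ∏ j ∈ Finset.range (s β),
          (((t β - if β = α then 1 else 0 : ℤ) : ℚ) + j + 1)) = E := by
        refine Finset.prod_congr rfl (fun β hβ => ?_)
        rw [if_neg (Finset.mem_erase.mp hβ).1]
        refine Finset.prod_congr rfl (fun j _ => ?_)
        push_cast
        ring
      rw [hα, hrest]
    have f3 : (∏ β, ∏ j ∈ Finset.range (s' β), ((t β : ℚ) + j + 1)) = X * E := by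
      rw [← Finset.mul_prod_erase Finset.univ _ (Finset.mem_univ α), hs'α]
      congr 1
      refine Finset.prod_congr rfl (fun β hβ => ?_)
      rw [hs'β β (Finset.mem_erase.mp hβ).1]
    have hsum : (∑ β, s β) = (∑ β, s' β) + 1 := by
      rw [← Finset.add_sum_erase Finset.univ s (Finset.mem_univ α),
        ← Finset.add_sum_erase Finset.univ s' (Finset.mem_univ α), hs'α, hm]
      have : (∑ β ∈ Finset.univ.erase α, s β) = ∑ β ∈ Finset.univ.erase α, s' β :=
        Finset.sum_congr rfl (fun β hβ => (hs'β β (Finset.mem_erase.mp hβ).1).symm)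
      omega
    have hfact : (∏ β, (s β).factorial) = (m + 1) * ∏ β, (s' β).factorial := by
      rw [← Finset.mul_prod_erase Finset.univ _ (Finset.mem_univ α),
        ← Finset.mul_prod_erase Finset.univ (fun β => (s' β).factorial) (Finset.mem_univ α),
        hs'α, hm]
      have : (∏ β ∈ Finset.univ.erase α, (s β).factorial) =
          ∏ β ∈ Finset.univ.erase α, (s' β).factorial :=
        Finset.prod_congr rfl (fun β hβ => by rw [hs'β β (Finset.mem_erase.mp hβ).1])
      rw [this, Nat.factorial_succ]
      ring
    have hQ : ((∏ β, (s' β).factorial : ℕ) : ℚ) ≠ 0 := by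
      have : 0 < ∏ β, (s' β).factorial :=
        Finset.prod_pos (fun β _ => (s' β).factorial_pos)
      exact_mod_cast this.ne'
    rw [f1, f2, f3, hsum, hfact]
    push_cast
    have hm1 : ((m : ℚ) + 1) ≠ 0 := by positivity
    field_simp
    ring

lemma Psum_comb {N k : ℕ} (v : Fin k → Fin N → ℤ)
    (hfin : ∀ γ : Fin N → ℤ, {t : Fin k → ℤ | ∀ i, 0 ≤ expVec v γ t i}.Finite)
    (g : Fin N → ℤ) (n1 n2 n3 : (Fin k → ℤ) → ℚ) :
    Psum v hfin g n1 - Psum v hfin g n2 + Psum v hfin g n3 =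
      Psum v hfin g (fun t => n1 t - n2 t + n3 t) := by
  rw [Psum, Psum, Psum, Psum, ← Finset.sum_sub_distrib, ← Finset.sum_add_distrib]
  refine Finset.sum_congr rfl (fun t _ => ?_)
  rw [Wterm_smul (n1 t), Wterm_smul (n2 t), Wterm_smul (n3 t),
    Wterm_smul (n1 t - n2 t + n3 t), ← sub_smul, ← add_smul]

lemma pderiv2_FF {N k : ℕ} (v : Fin k → Fin N → ℤ)
    (hfin : ∀ γ : Fin N → ℤ, {t : Fin k → ℤ | ∀ i, 0 ≤ expVec v γ t i}.Finite)
    (γ : Fin N → ℤ) (r : Fin k → Fin N → ℤ)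
    (hS : {s : Fin k → ℕ |
        Jpoly v hfin (fun i => γ i - ∑ β, (s β : ℤ) * r β i) s ≠ 0}.Finite)
    (x y : Fin N) (hxy : x ≠ y) :
    pderiv x (pderiv y (FF v hfin γ r hS)) =
      ∑ s ∈ hS.toFinset,
        Psum v hfin
          (fun i => ((γ i - ∑ β, (s β : ℤ) * r β i) - if i = x then 1 else 0) -
            if i = y then 1 else 0)
          (fun t => ((-1:ℚ) ^ (∑ β, s β) * ((∏ β, (s β).factorial : ℕ) : ℚ)⁻¹) *
            ∏ β, ∏ m ∈ Finset.range (s β), ((t β : ℚ) + m + 1)) := by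
  rw [FF, map_sum, map_sum]
  refine Finset.sum_congr rfl (fun s _ => ?_)
  rw [(pderiv y).map_smul, (pderiv x).map_smul,
    pderiv2_Jpoly v hfin (fun i => γ i - ∑ β, (s β : ℤ) * r β i) s x y hxy,
    ← Psum_smul]

/-- With `v^α = v^α_+ - v^α_-` (`v^α_+ = e_{Aα} + e_{Bα}`, `v^α_- = e_{Cα} + e_{Dα}`),
`v^α_0 = e_{Pα} + e_{Qα}` and `r^α = v^α_0 - v^α_+`, the modified hyperexponent
`F_γ = Σ_{s} ((-1)^s/s!) J_{γ-sr}^s` solves the antisymmetrized GKZ system: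
`Ō_α F_γ = (O_α + ∂²/∂z^{v^α_0}) F_γ = 0` for every `α`. -/
theorem stmt_18 {N k : ℕ} (v : Fin k → Fin N → ℤ) (A B C D P Q : Fin k → Fin N)
    (hAB : ∀ α, A α ≠ B α) (hCD : ∀ α, C α ≠ D α) (hPQ : ∀ α, P α ≠ Q α)
    (hv : ∀ α i, v α i =
      ((if i = A α then 1 else 0) + (if i = B α then 1 else 0) -
        (if i = C α then 1 else 0) - (if i = D α then 1 else 0)))
    (r : Fin k → Fin N → ℤ)
    (hr : ∀ α i, r α i =
      ((if i = P α then 1 else 0) + (if i = Q α then 1 else 0) -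
        (if i = A α then 1 else 0) - (if i = B α then 1 else 0)))
    (hfin : ∀ γ : Fin N → ℤ, {t : Fin k → ℤ | ∀ i, 0 ≤ expVec v γ t i}.Finite)
    (γ : Fin N → ℤ)
    (hS : {s : Fin k → ℕ |
        Jpoly v hfin (fun i => γ i - ∑ β, (s β : ℤ) * r β i) s ≠ 0}.Finite)
    (α : Fin k) :
    pderiv (A α) (pderiv (B α) (FF v hfin γ r hS)) -
        pderiv (C α) (pderiv (D α) (FF v hfin γ r hS)) +
        pderiv (P α) (pderiv (Q α) (FF v hfin γ r hS)) = 0 := by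
  classical
  rw [pderiv2_FF v hfin γ r hS (A α) (B α) (hAB α),
      pderiv2_FF v hfin γ r hS (C α) (D α) (hCD α),
      pderiv2_FF v hfin γ r hS (P α) (Q α) (hPQ α)]
  -- Step 2 : rewrite the C,D-sum via the t-shift
  have step2 : (∑ s ∈ hS.toFinset, Psum v hfin
        (fun i => ((γ i - ∑ β, (s β : ℤ) * r β i) - if i = C α then 1 else 0) -
          if i = D α then 1 else 0)
        (fun t => ((-1:ℚ) ^ (∑ β, s β) * ((∏ β, (s β).factorial : ℕ) : ℚ)⁻¹) *
          ∏ β, ∏ m ∈ Finset.range (s β), ((t β : ℚ) + m + 1))) =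
      ∑ s ∈ hS.toFinset, Psum v hfin
        (fun i => ((γ i - ∑ β, (s β : ℤ) * r β i) - if i = A α then 1 else 0) -
          if i = B α then 1 else 0)
        (fun t => ((-1:ℚ) ^ (∑ β, s β) * ((∏ β, (s β).factorial : ℕ) : ℚ)⁻¹) *
          ∏ β, ∏ m ∈ Finset.range (s β),
            (((t β - if β = α then 1 else 0 : ℤ) : ℚ) + m + 1)) := by
    refine Finset.sum_congr rfl (fun s _ => ?_)
    rw [Psum_shift v hfin α
      (fun i => ((γ i - ∑ β, (s β : ℤ) * r β i) - if i = C α then 1 else 0) -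
        if i = D α then 1 else 0)
      (fun t => ((-1:ℚ) ^ (∑ β, s β) * ((∏ β, (s β).factorial : ℕ) : ℚ)⁻¹) *
        ∏ β, ∏ m ∈ Finset.range (s β), ((t β : ℚ) + m + 1))]
    congr 1
    funext i
    rw [hv α i]
    ring
  rw [step2]
  -- Step 3 : rewrite the P,Q-sum via the s-shift
  have step3 : (∑ s ∈ hS.toFinset, Psum v hfin
        (fun i => ((γ i - ∑ β, (s β : ℤ) * r β i) - if i = P α then 1 else 0) -
          if i = Q α then 1 else 0)
        (fun t => ((-1:ℚ) ^ (∑ β, s β) * ((∏ β, (s β).factorial : ℕ) : ℚ)⁻¹) *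
          ∏ β, ∏ m ∈ Finset.range (s β), ((t β : ℚ) + m + 1))) =
      ∑ s ∈ hS.toFinset.image (fun s β => s β + if β = α then 1 else 0),
        Psum v hfin
          (fun i => ((γ i - ∑ β, (s β : ℤ) * r β i) - if i = A α then 1 else 0) -
            if i = B α then 1 else 0)
          (fun t => if s α = 0 then 0 else
            ((-1:ℚ) ^ (∑ β, (s β - if β = α then 1 else 0)) *
                ((∏ β, (s β - if β = α then 1 else 0).factorial : ℕ) : ℚ)⁻¹) *
              ∏ β, ∏ m ∈ Finset.range (s β - if β = α then 1 else 0),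
                ((t β : ℚ) + m + 1)) := by
    refine Finset.sum_nbij' (fun s β => s β + if β = α then 1 else 0)
      (fun s β => s β - if β = α then 1 else 0) ?_ ?_ ?_ ?_ ?_
    · intro s hs
      exact Finset.mem_image_of_mem _ hs
    · intro s' hs'
      obtain ⟨u, hu, huv⟩ := Finset.mem_image.mp hs'
      have : (fun β => s' β - if β = α then 1 else 0) = u := by
        funext β
        have := congrFun huv β
        omega
      show (fun β => s' β - if β = α then 1 else 0) ∈ hS.toFinset
      rw [this]
      exact hu
    · intro s _
      show (fun β => (s β + if β = α then 1 else 0) - if β = α then 1 else 0) = s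
      funext β
      omega
    · intro s' hs'
      obtain ⟨u, hu, huv⟩ := Finset.mem_image.mp hs'
      show (fun β => (s' β - if β = α then 1 else 0) + if β = α then 1 else 0) = s'
      funext β
      have := congrFun huv β
      omega
    · intro s _
      have hg : (fun i => ((γ i - ∑ β, (((fun β => s β + if β = α then 1 else 0) β : ℕ) : ℤ) * r β i) -
            if i = A α then 1 else 0) - if i = B α then 1 else 0) =
          (fun i => ((γ i - ∑ β, (s β : ℤ) * r β i) - if i = P α then 1 else 0) -
            if i = Q α then 1 else 0) := by
        funext i
        simp only
        have hsum : (∑ β, ((s β + if β = α then 1 else 0 : ℕ) : ℤ) * r β i)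
            = (∑ β, (s β : ℤ) * r β i) + r α i := by
          have h1 : ∀ β : Fin k, ((s β + if β = α then 1 else 0 : ℕ) : ℤ) * r β i
              = (s β : ℤ) * r β i + (if β = α then r β i else 0) := by
            intro β
            by_cases h : β = α <;> simp [h] <;> ring
          rw [Finset.sum_congr rfl (fun β _ => h1 β), Finset.sum_add_distrib,
            Finset.sum_ite_eq' Finset.univ α (fun β => r β i)]
          simp only [Finset.mem_univ, if_true]
        rw [hsum, hr α i]
        ring
      have hn : (fun t : Fin k → ℤ => if (fun β => s β + if β = α then 1 else 0) α = 0 then (0:ℚ) else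
            ((-1:ℚ) ^ (∑ β, ((fun β => s β + if β = α then 1 else 0) β - if β = α then 1 else 0)) *
                ((∏ β, ((fun β => s β + if β = α then 1 else 0) β - if β = α then 1 else 0).factorial : ℕ) : ℚ)⁻¹) *
              ∏ β, ∏ m ∈ Finset.range ((fun β => s β + if β = α then 1 else 0) β - if β = α then 1 else 0),
                ((t β : ℚ) + m + 1)) =
          (fun t => ((-1:ℚ) ^ (∑ β, s β) * ((∏ β, (s β).factorial : ℕ) : ℚ)⁻¹) *
            ∏ β, ∏ m ∈ Finset.range (s β), ((t β : ℚ) + m + 1)) := by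
        funext t
        simp only [Nat.add_sub_cancel]
        simp
      simp only at hg hn ⊢
      rw [hg, hn]
  rw [step3]
  -- common index set
  have hsub1 : hS.toFinset ⊆ hS.toFinset ∪
      hS.toFinset.image (fun s β => s β + if β = α then 1 else 0) :=
    Finset.subset_union_left
  have hsub2 : hS.toFinset.image (fun s β => s β + if β = α then 1 else 0) ⊆
      hS.toFinset ∪ hS.toFinset.image (fun s β => s β + if β = α then 1 else 0) :=
    Finset.subset_union_right
  have e1 : (∑ s ∈ hS.toFinset, Psum v hfin
        (fun i => ((γ i - ∑ β, (s β : ℤ) * r β i) - if i = A α then 1 else 0) -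
          if i = B α then 1 else 0)
        (fun t => ((-1:ℚ) ^ (∑ β, s β) * ((∏ β, (s β).factorial : ℕ) : ℚ)⁻¹) *
          ∏ β, ∏ m ∈ Finset.range (s β), ((t β : ℚ) + m + 1))) =
      ∑ s ∈ hS.toFinset ∪
        hS.toFinset.image (fun s β => s β + if β = α then 1 else 0), Psum v hfin
        (fun i => ((γ i - ∑ β, (s β : ℤ) * r β i) - if i = A α then 1 else 0) -
          if i = B α then 1 else 0)
        (fun t => ((-1:ℚ) ^ (∑ β, s β) * ((∏ β, (s β).factorial : ℕ) : ℚ)⁻¹) *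
          ∏ β, ∏ m ∈ Finset.range (s β), ((t β : ℚ) + m + 1)) := by
    refine Finset.sum_subset hsub1 ?_
    intro s _ hs
    have hJ : Jpoly v hfin (fun i => γ i - ∑ β, (s β : ℤ) * r β i) s = 0 := by
      by_contra h
      exact hs (hS.mem_toFinset.mpr h)
    have h2 : Psum v hfin
        (fun i => ((γ i - ∑ β, (s β : ℤ) * r β i) - if i = A α then 1 else 0) -
          if i = B α then 1 else 0)
        (fun t => ∏ β, ∏ m ∈ Finset.range (s β), ((t β : ℚ) + m + 1)) = 0 := by
      rw [← pderiv2_Jpoly v hfin (fun i => γ i - ∑ β, (s β : ℤ) * r β i) s (A α) (B α)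
        (hAB α), hJ, map_zero, map_zero]
    rw [Psum_smul, h2, smul_zero]
  have e2 : (∑ s ∈ hS.toFinset, Psum v hfin
        (fun i => ((γ i - ∑ β, (s β : ℤ) * r β i) - if i = A α then 1 else 0) -
          if i = B α then 1 else 0)
        (fun t => ((-1:ℚ) ^ (∑ β, s β) * ((∏ β, (s β).factorial : ℕ) : ℚ)⁻¹) *
          ∏ β, ∏ m ∈ Finset.range (s β),
            (((t β - if β = α then 1 else 0 : ℤ) : ℚ) + m + 1))) =
      ∑ s ∈ hS.toFinset ∪
        hS.toFinset.image (fun s β => s β + if β = α then 1 else 0), Psum v hfin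
        (fun i => ((γ i - ∑ β, (s β : ℤ) * r β i) - if i = A α then 1 else 0) -
          if i = B α then 1 else 0)
        (fun t => ((-1:ℚ) ^ (∑ β, s β) * ((∏ β, (s β).factorial : ℕ) : ℚ)⁻¹) *
          ∏ β, ∏ m ∈ Finset.range (s β),
            (((t β - if β = α then 1 else 0 : ℤ) : ℚ) + m + 1)) := by
    refine Finset.sum_subset hsub1 ?_
    intro s _ hs
    have hJ : Jpoly v hfin (fun i => γ i - ∑ β, (s β : ℤ) * r β i) s = 0 := by
      by_contra h
      exact hs (hS.mem_toFinset.mpr h)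
    have h2 : Psum v hfin
        (fun i => ((γ i - ∑ β, (s β : ℤ) * r β i) - if i = C α then 1 else 0) -
          if i = D α then 1 else 0)
        (fun t => ∏ β, ∏ m ∈ Finset.range (s β), ((t β : ℚ) + m + 1)) = 0 := by
      rw [← pderiv2_Jpoly v hfin (fun i => γ i - ∑ β, (s β : ℤ) * r β i) s (C α) (D α)
        (hCD α), hJ, map_zero, map_zero]
    have h3 := Psum_shift v hfin α
      (fun i => ((γ i - ∑ β, (s β : ℤ) * r β i) - if i = C α then 1 else 0) -
        if i = D α then 1 else 0)
      (fun t => ∏ β, ∏ m ∈ Finset.range (s β), ((t β : ℚ) + m + 1))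
    rw [h2] at h3
    have hg : (fun i => ((((γ i - ∑ β, (s β : ℤ) * r β i) - if i = C α then 1 else 0) -
          if i = D α then 1 else 0) - v α i)) =
        (fun i => ((γ i - ∑ β, (s β : ℤ) * r β i) - if i = A α then 1 else 0) -
          if i = B α then 1 else 0) := by
      funext i
      rw [hv α i]
      ring
    rw [hg] at h3
    rw [Psum_smul, ← h3, smul_zero]
  have e3 : (∑ s ∈ hS.toFinset.image (fun s β => s β + if β = α then 1 else 0),
        Psum v hfin
          (fun i => ((γ i - ∑ β, (s β : ℤ) * r β i) - if i = A α then 1 else 0) -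
            if i = B α then 1 else 0)
          (fun t => if s α = 0 then 0 else
            ((-1:ℚ) ^ (∑ β, (s β - if β = α then 1 else 0)) *
                ((∏ β, (s β - if β = α then 1 else 0).factorial : ℕ) : ℚ)⁻¹) *
              ∏ β, ∏ m ∈ Finset.range (s β - if β = α then 1 else 0),
                ((t β : ℚ) + m + 1))) =
      ∑ s ∈ hS.toFinset ∪
        hS.toFinset.image (fun s β => s β + if β = α then 1 else 0), Psum v hfin
          (fun i => ((γ i - ∑ β, (s β : ℤ) * r β i) - if i = A α then 1 else 0) -
            if i = B α then 1 else 0)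
          (fun t => if s α = 0 then 0 else
            ((-1:ℚ) ^ (∑ β, (s β - if β = α then 1 else 0)) *
                ((∏ β, (s β - if β = α then 1 else 0).factorial : ℕ) : ℚ)⁻¹) *
              ∏ β, ∏ m ∈ Finset.range (s β - if β = α then 1 else 0),
                ((t β : ℚ) + m + 1)) := by
    refine Finset.sum_subset hsub2 ?_
    intro s _ hs
    by_cases h0 : s α = 0
    · exact Psum_zero v hfin _ (fun t => if_pos h0)
    · have hmem : (fun β => s β - if β = α then 1 else 0) ∉ hS.toFinset := by
        intro hmem
        apply hs
        refine Finset.mem_image.mpr ⟨_, hmem, ?_⟩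
        show (fun β => (s β - if β = α then 1 else 0) + if β = α then 1 else 0) = s
        funext β
        by_cases hβ : β = α
        · subst hβ; rw [if_pos rfl]; omega
        · rw [if_neg hβ]; omega
      have hJ : Jpoly v hfin
          (fun i => γ i - ∑ β, (((fun β => s β - if β = α then 1 else 0) β : ℕ) : ℤ) * r β i)
          (fun β => s β - if β = α then 1 else 0) = 0 := by
        by_contra h
        exact hmem (hS.mem_toFinset.mpr h)
      have h2 : Psum v hfin
          (fun i => ((γ i - ∑ β, ((s β - if β = α then 1 else 0 : ℕ) : ℤ) * r β i) -
            if i = P α then 1 else 0) - if i = Q α then 1 else 0)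
          (fun t => ∏ β, ∏ m ∈ Finset.range (s β - if β = α then 1 else 0),
            ((t β : ℚ) + m + 1)) = 0 := by
        rw [← pderiv2_Jpoly v hfin
          (fun i => γ i - ∑ β, ((s β - if β = α then 1 else 0 : ℕ) : ℤ) * r β i)
          (fun β => s β - if β = α then 1 else 0) (P α) (Q α) (hPQ α)]
        rw [hJ, map_zero, map_zero]
      have hg : (fun i => ((γ i - ∑ β, ((s β - if β = α then 1 else 0 : ℕ) : ℤ) * r β i) -
            if i = P α then 1 else 0) - if i = Q α then 1 else 0) =
          (fun i => ((γ i - ∑ β, (s β : ℤ) * r β i) - if i = A α then 1 else 0) -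
            if i = B α then 1 else 0) := by
        funext i
        have hsum : (∑ β, ((s β - if β = α then 1 else 0 : ℕ) : ℤ) * r β i)
            = (∑ β, (s β : ℤ) * r β i) - r α i := by
          have h1 : ∀ β : Fin k, ((s β - if β = α then 1 else 0 : ℕ) : ℤ) * r β i
              = (s β : ℤ) * r β i - (if β = α then r β i else 0) := by
            intro β
            by_cases hβ : β = α
            · subst hβ
              rw [if_pos rfl, if_pos rfl]
              have hc : ((s β - 1 : ℕ) : ℤ) = (s β : ℤ) - 1 := by omega
              rw [hc]
              ring
            · rw [if_neg hβ, if_neg hβ, Nat.sub_zero]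
              ring
          rw [Finset.sum_congr rfl (fun β _ => h1 β), Finset.sum_sub_distrib,
            Finset.sum_ite_eq' Finset.univ α (fun β => r β i)]
          simp only [Finset.mem_univ, if_true]
        rw [hsum, hr α i]
        ring
      rw [hg] at h2
      have hcongr : Psum v hfin
          (fun i => ((γ i - ∑ β, (s β : ℤ) * r β i) - if i = A α then 1 else 0) -
            if i = B α then 1 else 0)
          (fun t => if s α = 0 then (0:ℚ) else
            ((-1:ℚ) ^ (∑ β, (s β - if β = α then 1 else 0)) *
                ((∏ β, (s β - if β = α then 1 else 0).factorial : ℕ) : ℚ)⁻¹) *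
              ∏ β, ∏ m ∈ Finset.range (s β - if β = α then 1 else 0),
                ((t β : ℚ) + m + 1)) =
        Psum v hfin
          (fun i => ((γ i - ∑ β, (s β : ℤ) * r β i) - if i = A α then 1 else 0) -
            if i = B α then 1 else 0)
          (fun t =>
            ((-1:ℚ) ^ (∑ β, (s β - if β = α then 1 else 0)) *
                ((∏ β, (s β - if β = α then 1 else 0).factorial : ℕ) : ℚ)⁻¹) *
              ∏ β, ∏ m ∈ Finset.range (s β - if β = α then 1 else 0),
                ((t β : ℚ) + m + 1)) :=
        Psum_congr v hfin _ (fun t => if_neg h0)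
      rw [hcongr, Psum_smul, h2, smul_zero]
  rw [e1, e2, e3, ← Finset.sum_sub_distrib, ← Finset.sum_add_distrib]
  refine Finset.sum_eq_zero (fun s _ => ?_)
  rw [Psum_comb]
  exact Psum_zero v hfin _ (fun t => scalar_id α s t)
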